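/- Let d > 0, let γ, P : ℝ → ℝ be continuously differentiable, and let ψ : (0, 1] → ℝ be three times continuously differentiable with ψ″(s) + (3/s)ψ′(s) = −d²·γ(d²s²ψ(s)) − s⁻²·P(d²s²ψ(s)) for all s ∈ (0, 1]. Then the function w(s) := 2ψ(s) + sψ′(s) satisfies w″(s) + (3/s)w′(s) + ( d⁴ s² γ′(d²s²ψ(s)) + d² P′(d²s²ψ(s)) )·w(s) = −4 d² γ(d²s²ψ(s)) − 2 s⁻² P(d²s²ψ(s)) for all s ∈ (0, 1]. -/

import Mathlib

open Set

/-- (The good unknown `w = 2ψ + sψ'`.) Let `d > 0`, `γ, P : ℝ → ℝ` be `C¹`,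
and let `ψ` be three times continuously differentiable on `(0,1]` (with derivative functions
`ψ₁, ψ₂, ψ₃`) satisfying `ψ'' + (3/s)ψ' = -d² γ(d²s²ψ) - s⁻² P(d²s²ψ)` on `(0,1]`. Then
`w := 2ψ + sψ'` (whose first and second derivatives are `3ψ' + sψ''` and `4ψ'' + sψ'''`)
satisfies `w'' + (3/s)w' + (d⁴s²γ'(d²s²ψ) + d²P'(d²s²ψ)) w = -4d²γ(d²s²ψ) - 2s⁻²P(d²s²ψ)`
on `(0,1]`. -/
theorem good_unknown_ode
    (d : ℝ) (hd : 0 < d) (γ P : ℝ → ℝ) (hγ : ContDiff ℝ 1 γ) (hP : ContDiff ℝ 1 P)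
    (ψ ψ₁ ψ₂ ψ₃ : ℝ → ℝ)
    (hψ₁ : ∀ s ∈ Ioc (0:ℝ) 1, HasDerivWithinAt ψ (ψ₁ s) (Ioc 0 1) s)
    (hψ₂ : ∀ s ∈ Ioc (0:ℝ) 1, HasDerivWithinAt ψ₁ (ψ₂ s) (Ioc 0 1) s)
    (hψ₃ : ∀ s ∈ Ioc (0:ℝ) 1, HasDerivWithinAt ψ₂ (ψ₃ s) (Ioc 0 1) s)
    (hψ₃c : ContinuousOn ψ₃ (Ioc 0 1))
    (hode : ∀ s ∈ Ioc (0:ℝ) 1,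
      ψ₂ s + (3 / s) * ψ₁ s =
        -(d ^ 2) * γ (d ^ 2 * s ^ 2 * ψ s) - (s ^ 2)⁻¹ * P (d ^ 2 * s ^ 2 * ψ s)) :
    ∀ s ∈ Ioc (0:ℝ) 1,
      HasDerivWithinAt (fun t => 2 * ψ t + t * ψ₁ t) (3 * ψ₁ s + s * ψ₂ s) (Ioc 0 1) s ∧
      HasDerivWithinAt (fun t => 3 * ψ₁ t + t * ψ₂ t) (4 * ψ₂ s + s * ψ₃ s) (Ioc 0 1) s ∧
      (4 * ψ₂ s + s * ψ₃ s) + (3 / s) * (3 * ψ₁ s + s * ψ₂ s)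
          + (d ^ 4 * s ^ 2 * deriv γ (d ^ 2 * s ^ 2 * ψ s)
              + d ^ 2 * deriv P (d ^ 2 * s ^ 2 * ψ s)) * (2 * ψ s + s * ψ₁ s) =
        -4 * d ^ 2 * γ (d ^ 2 * s ^ 2 * ψ s)
          - 2 * (s ^ 2)⁻¹ * P (d ^ 2 * s ^ 2 * ψ s) := by

  intro s hs
  have hs0 : s ≠ 0 := ne_of_gt hs.1
  -- first derivative of w
  have h1 : HasDerivWithinAt (fun t => 2 * ψ t + t * ψ₁ t) (3 * ψ₁ s + s * ψ₂ s) (Ioc 0 1) s := by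
    have := ((hψ₁ s hs).const_mul 2).add
      (((hasDerivWithinAt_id s (Ioc (0:ℝ) 1)).mul (hψ₂ s hs)))
    simp only [id_eq, Pi.add_def, Pi.mul_def] at this
    exact this.congr_deriv (by ring)
  have h2 : HasDerivWithinAt (fun t => 3 * ψ₁ t + t * ψ₂ t) (4 * ψ₂ s + s * ψ₃ s) (Ioc 0 1) s := by
    have := ((hψ₂ s hs).const_mul 3).add
      (((hasDerivWithinAt_id s (Ioc (0:ℝ) 1)).mul (hψ₃ s hs)))
    simp only [id_eq, Pi.add_def, Pi.mul_def] at this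
    exact this.congr_deriv (by ring)
  refine ⟨h1, h2, ?_⟩
  set u : ℝ := d ^ 2 * s ^ 2 * ψ s with hu_def
  -- derivative of the inner function t ↦ d² t² ψ t
  have hu : HasDerivWithinAt (fun t => d ^ 2 * t ^ 2 * ψ t)
      (d ^ 2 * (2 * s * ψ s + s ^ 2 * ψ₁ s)) (Ioc 0 1) s := by
    have := (((hasDerivAt_pow 2 s).hasDerivWithinAt.mul (hψ₁ s hs)).const_mul (d ^ 2))
    have heq : (fun t : ℝ => d ^ 2 * (t ^ 2 * ψ t)) = fun t => d ^ 2 * t ^ 2 * ψ t := by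
      funext t; ring
    simp only [Pi.mul_def] at this
    rw [heq] at this
    exact this.congr_deriv (by ring)
  -- derivative of LHS of the ODE
  have hE : HasDerivWithinAt (fun t => ψ₂ t + (3 / t) * ψ₁ t)
      (ψ₃ s + (-(3 / s ^ 2) * ψ₁ s + (3 / s) * ψ₂ s)) (Ioc 0 1) s := by
    have hinv : HasDerivWithinAt (fun t : ℝ => 3 / t) (-(3 / s ^ 2)) (Ioc 0 1) s := by
      have this : HasDerivWithinAt (fun t : ℝ => 3 * t⁻¹) (3 * -(s ^ 2)⁻¹) (Ioc 0 1) s :=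
        ((hasDerivAt_inv hs0).hasDerivWithinAt).const_mul (3:ℝ)
      have heq : (fun t : ℝ => 3 * t⁻¹) = fun t => 3 / t := by
        funext t; rw [div_eq_mul_inv]
      rw [heq] at this
      convert this using 1
      field_simp
    exact (hψ₃ s hs).add (hinv.mul (hψ₂ s hs))
  -- derivative of RHS of the ODE
  have hF : HasDerivWithinAt
      (fun t => -(d ^ 2) * γ (d ^ 2 * t ^ 2 * ψ t) - (t ^ 2)⁻¹ * P (d ^ 2 * t ^ 2 * ψ t))
      (-(d ^ 2) * (deriv γ u * (d ^ 2 * (2 * s * ψ s + s ^ 2 * ψ₁ s)))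
        + ((2 * s / (s ^ 2) ^ 2) * P u
          - (s ^ 2)⁻¹ * (deriv P u * (d ^ 2 * (2 * s * ψ s + s ^ 2 * ψ₁ s)))))
      (Ioc 0 1) s := by
    have hγd : HasDerivAt γ (deriv γ u) u := (hγ.differentiable one_ne_zero u).hasDerivAt
    have hPd : HasDerivAt P (deriv P u) u := (hP.differentiable one_ne_zero u).hasDerivAt
    have hγc : HasDerivWithinAt (fun t => γ (d ^ 2 * t ^ 2 * ψ t))
        (deriv γ u * (d ^ 2 * (2 * s * ψ s + s ^ 2 * ψ₁ s))) (Ioc 0 1) s :=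
      HasDerivAt.comp_hasDerivWithinAt s hγd hu
    have hPc : HasDerivWithinAt (fun t => P (d ^ 2 * t ^ 2 * ψ t))
        (deriv P u * (d ^ 2 * (2 * s * ψ s + s ^ 2 * ψ₁ s))) (Ioc 0 1) s :=
      HasDerivAt.comp_hasDerivWithinAt s hPd hu
    have hinv2 : HasDerivWithinAt (fun t : ℝ => (t ^ 2)⁻¹)
        (-(2 * s) / (s ^ 2) ^ 2) (Ioc 0 1) s := by
      have this : HasDerivWithinAt (fun t : ℝ => (t ^ 2)⁻¹)
          (-(↑2 * s ^ (2 - 1)) / (s ^ 2) ^ 2) (Ioc 0 1) s :=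
        ((hasDerivAt_pow 2 s).hasDerivWithinAt).inv (pow_ne_zero 2 hs0)
      convert this using 1
      ring
    have := (hγc.const_mul (-(d ^ 2))).sub (hinv2.mul hPc)
    exact this.congr_deriv (by ring)
  -- the two sides agree on Ioc 0 1, hence their derivatives agree
  have hF' : HasDerivWithinAt (fun t => ψ₂ t + (3 / t) * ψ₁ t)
      (-(d ^ 2) * (deriv γ u * (d ^ 2 * (2 * s * ψ s + s ^ 2 * ψ₁ s)))
        + ((2 * s / (s ^ 2) ^ 2) * P u
          - (s ^ 2)⁻¹ * (deriv P u * (d ^ 2 * (2 * s * ψ s + s ^ 2 * ψ₁ s))))) (Ioc 0 1) s :=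
    hF.congr (fun t ht => hode t ht) (hode s hs)
  have hud : UniqueDiffWithinAt ℝ (Ioc (0:ℝ) 1) s := (uniqueDiffOn_Ioc 0 1) s hs
  have huniq : ψ₃ s + (-(3 / s ^ 2) * ψ₁ s + (3 / s) * ψ₂ s)
      = -(d ^ 2) * (deriv γ u * (d ^ 2 * (2 * s * ψ s + s ^ 2 * ψ₁ s)))
        + ((2 * s / (s ^ 2) ^ 2) * P u
          - (s ^ 2)⁻¹ * (deriv P u * (d ^ 2 * (2 * s * ψ s + s ^ 2 * ψ₁ s)))) := by
    rw [← hE.derivWithin hud, ← hF'.derivWithin hud]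
  have hode' := hode s hs
  have key : (4 * ψ₂ s + s * ψ₃ s) + (3 / s) * (3 * ψ₁ s + s * ψ₂ s)
        + (d ^ 4 * s ^ 2 * deriv γ u + d ^ 2 * deriv P u) * (2 * ψ s + s * ψ₁ s)
        - (-4 * d ^ 2 * γ u - 2 * (s ^ 2)⁻¹ * P u)
      = s * ((ψ₃ s + (-(3 / s ^ 2) * ψ₁ s + (3 / s) * ψ₂ s))
          - (-(d ^ 2) * (deriv γ u * (d ^ 2 * (2 * s * ψ s + s ^ 2 * ψ₁ s)))
            + ((2 * s / (s ^ 2) ^ 2) * P u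
              - (s ^ 2)⁻¹ * (deriv P u * (d ^ 2 * (2 * s * ψ s + s ^ 2 * ψ₁ s))))))
        + 4 * ((ψ₂ s + (3 / s) * ψ₁ s) - (-(d ^ 2) * γ u - (s ^ 2)⁻¹ * P u)) := by
    field_simp
    ring
  have hz : (4 * ψ₂ s + s * ψ₃ s) + (3 / s) * (3 * ψ₁ s + s * ψ₂ s)
        + (d ^ 4 * s ^ 2 * deriv γ u + d ^ 2 * deriv P u) * (2 * ψ s + s * ψ₁ s)
        - (-4 * d ^ 2 * γ u - 2 * (s ^ 2)⁻¹ * P u) = 0 := by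
    rw [key, huniq, hode']
    ring
  linarith [hz]
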